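/- Let Θ ∈ ℝ^{ℓ×n} and u₁,…,u_m ∈ ℝ^n with Θu_j ≠ 0 for all j. Set β_j = 2/‖Θu_j‖², U = [u₁ | ⋯ | u_m], and define upper-triangular matrices T_j recursively by T₁ = [β₁] and T_{j+1} = [[T_j, −β_{j+1} T_j (ΘU_j)ᵀ Θu_{j+1}], [0, β_{j+1}]]. Then with T = T_m, the compositions of randomized Householder reflectors satisfy P(u₁,Θ)⋯P(u_m,Θ) = I_n − U T (ΘU)ᵀ Θ and P(u_m,Θ)⋯P(u₁,Θ) = I_n − U Tᵀ (ΘU)ᵀ Θ. -/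

import Mathlib

open Matrix

/-- The randomized Householder reflector `P(z, Θ) = I - (2/‖Θz‖²) z (Θz)ᵀ Θ`. -/
noncomputable def rhouse {l n : ℕ} (Θ : Matrix (Fin l) (Fin n) ℝ) (z : Fin n → ℝ) :
    Matrix (Fin n) (Fin n) ℝ :=
  1 - (2 / ((Θ.mulVec z) ⬝ᵥ (Θ.mulVec z))) • (Matrix.vecMulVec z (Θ.mulVec z) * Θ)

/-- The matrix `U_j = [u₁ | ⋯ | u_j]` whose columns are the (first `j`) Householder
vectors. -/
def Umat {n : ℕ} (u : ℕ → Fin n → ℝ) (j : ℕ) : Matrix (Fin n) (Fin j) ℝ :=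
  Matrix.of fun i a => u a i

/-- The upper-triangular compact-form factor `T_j`, defined recursively by `T₁ = [β₁]`,
`T_{j+1} = [[T_j, -β_{j+1} T_j (ΘU_j)ᵀ Θu_{j+1}], [0, β_{j+1}]]`, with
`β_j = 2/‖Θu_j‖²` (indices are zero-based here). -/
noncomputable def Tmat {l n : ℕ} (Θ : Matrix (Fin l) (Fin n) ℝ) (u : ℕ → Fin n → ℝ) :
    (j : ℕ) → Matrix (Fin j) (Fin j) ℝ
  | 0 => 0
  | j + 1 =>
    Matrix.reindex finSumFinEquiv finSumFinEquiv
      (Matrix.fromBlocks (Tmat Θ u j)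
        (Matrix.of fun i (_ : Fin 1) =>
          ((-(2 / ((Θ.mulVec (u j)) ⬝ᵥ (Θ.mulVec (u j))))) •
              ((Tmat Θ u j).mulVec fun a : Fin j =>
                (Θ.mulVec (u a)) ⬝ᵥ (Θ.mulVec (u j)))) i)
        0
        (Matrix.of fun _ _ => 2 / ((Θ.mulVec (u j)) ⬝ᵥ (Θ.mulVec (u j)))))

-- helpers
lemma rhouse_eq {l n : ℕ} (Θ : Matrix (Fin l) (Fin n) ℝ) (z : Fin n → ℝ) :
    rhouse Θ z = 1 - (2 / ((Θ.mulVec z) ⬝ᵥ (Θ.mulVec z))) •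
      (Matrix.replicateCol (Fin 1) z * (Θ * Matrix.replicateCol (Fin 1) z)ᵀ * Θ) := by
  rw [rhouse, Matrix.vecMulVec_eq (Fin 1), ← Matrix.replicateCol_mulVec, Matrix.transpose_replicateCol]
  rfl

lemma Umat_succ {n : ℕ} (u : ℕ → Fin n → ℝ) (m : ℕ) :
    Umat u (m + 1) =
      (Matrix.fromCols (Umat u m) (Matrix.replicateCol (Fin 1) (u m))).submatrix id
        finSumFinEquiv.symm := by
  ext i a
  obtain ⟨x, rfl⟩ := finSumFinEquiv.surjective a
  cases x <;> simp [Umat, Matrix.fromCols]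

lemma sub_mul_id {l n : ℕ} {J J' : Type*} (A : Matrix (Fin l) (Fin n) ℝ)
    (B : Matrix (Fin n) J ℝ) (f : J' → J) :
    A * B.submatrix id f = (A * B).submatrix id f := by
  ext i j; simp [Matrix.mul_apply]

lemma id_mul_sub {l n : ℕ} {J J' : Type*} (A : Matrix J (Fin n) ℝ)
    (B : Matrix (Fin n) (Fin l) ℝ) (f : J' → J) :
    A.submatrix f id * B = (A * B).submatrix f id := by
  ext i j; simp [Matrix.mul_apply]

example : True := trivial

lemma col_smul' {n : ℕ} (c : ℝ) (w : Fin n → ℝ) :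
    Matrix.replicateCol (Fin 1) (c • w) = c • Matrix.replicateCol (Fin 1) w := by
  ext i j; simp [Matrix.replicateCol]

lemma Tmat_succ {l n : ℕ} (Θ : Matrix (Fin l) (Fin n) ℝ) (u : ℕ → Fin n → ℝ) (m : ℕ) :
    Tmat Θ u (m + 1) =
      (Matrix.fromBlocks (Tmat Θ u m)
        ((-(2 / ((Θ.mulVec (u m)) ⬝ᵥ (Θ.mulVec (u m))))) •
          (Tmat Θ u m * (Θ * Umat u m)ᵀ * (Θ * Matrix.replicateCol (Fin 1) (u m))))
        0
        ((2 / ((Θ.mulVec (u m)) ⬝ᵥ (Θ.mulVec (u m)))) • (1 : Matrix (Fin 1) (Fin 1) ℝ))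
        ).submatrix finSumFinEquiv.symm finSumFinEquiv.symm := by
  rw [Tmat, Matrix.reindex_apply]
  have hv : Matrix.replicateCol (Fin 1) (fun a : Fin m => (Θ.mulVec (u a)) ⬝ᵥ (Θ.mulVec (u m))) =
      (Θ * Umat u m)ᵀ * (Θ * Matrix.replicateCol (Fin 1) (u m)) := by
    ext i j
    simp only [Matrix.replicateCol_apply, Matrix.mul_apply, Matrix.transpose_apply, Matrix.mulVec,
      dotProduct, Umat, Matrix.of_apply, Matrix.replicateCol, Finset.sum_mul, Finset.mul_sum]
  have hB : (Matrix.of fun i (_ : Fin 1) =>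
      ((-(2 / ((Θ.mulVec (u m)) ⬝ᵥ (Θ.mulVec (u m))))) •
          ((Tmat Θ u m).mulVec fun a : Fin m =>
            (Θ.mulVec (u a)) ⬝ᵥ (Θ.mulVec (u m)))) i) =
      ((-(2 / ((Θ.mulVec (u m)) ⬝ᵥ (Θ.mulVec (u m))))) •
        (Tmat Θ u m * (Θ * Umat u m)ᵀ * (Θ * Matrix.replicateCol (Fin 1) (u m)))) := by
    have h0 : (Matrix.of fun i (_ : Fin 1) =>
      ((-(2 / ((Θ.mulVec (u m)) ⬝ᵥ (Θ.mulVec (u m))))) •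
          ((Tmat Θ u m).mulVec fun a : Fin m =>
            (Θ.mulVec (u a)) ⬝ᵥ (Θ.mulVec (u m)))) i) =
        Matrix.replicateCol (Fin 1) ((-(2 / ((Θ.mulVec (u m)) ⬝ᵥ (Θ.mulVec (u m))))) •
          ((Tmat Θ u m).mulVec fun a : Fin m =>
            (Θ.mulVec (u a)) ⬝ᵥ (Θ.mulVec (u m)))) := rfl
    rw [h0, col_smul', Matrix.replicateCol_mulVec, hv, Matrix.mul_assoc]
  have hD : (Matrix.of fun _ _ : Fin 1 => 2 / ((Θ.mulVec (u m)) ⬝ᵥ (Θ.mulVec (u m)))) =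
      ((2 / ((Θ.mulVec (u m)) ⬝ᵥ (Θ.mulVec (u m)))) • (1 : Matrix (Fin 1) (Fin 1) ℝ)) := by
    ext i j
    fin_cases i; fin_cases j
    simp [Matrix.one_apply]
  rw [hB, hD]

lemma finRange_prod_eq {n : ℕ} (k : ℕ) (f : ℕ → Matrix (Fin n) (Fin n) ℝ) :
    ((List.finRange k).map fun j : Fin k => f ↑j) = (List.range k).map f := by
  rw [← List.map_coe_finRange_eq_range, List.map_map]
  rfl


set_option maxHeartbeats 1000000 in
/-- compact representation of compositions of randomized Householder
reflectors: `P(u₁,Θ)⋯P(u_m,Θ) = I - U T (ΘU)ᵀ Θ` and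
`P(u_m,Θ)⋯P(u₁,Θ) = I - U Tᵀ (ΘU)ᵀ Θ`, with `T = T_m` defined by the recursion. -/
theorem rhouse_compact {l n : ℕ} (m : ℕ) (Θ : Matrix (Fin l) (Fin n) ℝ)
    (u : ℕ → Fin n → ℝ) (hu : ∀ j < m, Θ.mulVec (u j) ≠ 0) :
    ((List.finRange m).map fun j => rhouse Θ (u j)).prod =
        1 - Umat u m * Tmat Θ u m * (Θ * Umat u m)ᵀ * Θ ∧
      ((List.finRange m).reverse.map fun j => rhouse Θ (u j)).prod =
        1 - Umat u m * (Tmat Θ u m)ᵀ * (Θ * Umat u m)ᵀ * Θ := by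
  clear hu
  have key : ∀ k : ℕ,
      (((List.range k).map fun j => rhouse Θ (u j)).prod =
        1 - Umat u k * Tmat Θ u k * (Θ * Umat u k)ᵀ * Θ) ∧
      (((List.range k).reverse.map fun j => rhouse Θ (u j)).prod =
        1 - Umat u k * (Tmat Θ u k)ᵀ * (Θ * Umat u k)ᵀ * Θ) := by
    intro k
    induction k with
    | zero =>
        constructor <;> simp [Tmat, Matrix.mul_zero, Matrix.zero_mul]
    | succ m ih =>
      obtain ⟨ih1, ih2⟩ := ih
      set β : ℝ := 2 / ((Θ.mulVec (u m)) ⬝ᵥ (Θ.mulVec (u m))) with hβ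
      set U : Matrix (Fin n) (Fin m) ℝ := Umat u m with hU
      set T : Matrix (Fin m) (Fin m) ℝ := Tmat Θ u m with hT
      set c : Matrix (Fin n) (Fin 1) ℝ := Matrix.replicateCol (Fin 1) (u m) with hc
      have hA : Umat u (m+1) * Tmat Θ u (m+1) * (Θ * Umat u (m+1))ᵀ =
          Matrix.fromCols U c *
            Matrix.fromBlocks T ((-β) • (T * (Θ * U)ᵀ * (Θ * c))) 0 (β • (1 : Matrix (Fin 1) (Fin 1) ℝ)) *
            (Θ * Matrix.fromCols U c)ᵀ := by
        rw [Umat_succ, Tmat_succ, ← hU, ← hT, ← hβ, ← hc, Matrix.submatrix_mul_equiv,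
          sub_mul_id, Matrix.transpose_submatrix, Matrix.submatrix_mul_equiv,
          Matrix.submatrix_id_id]
      have hA' : Umat u (m+1) * (Tmat Θ u (m+1))ᵀ * (Θ * Umat u (m+1))ᵀ =
          Matrix.fromCols U c *
            (Matrix.fromBlocks T ((-β) • (T * (Θ * U)ᵀ * (Θ * c))) 0 (β • (1 : Matrix (Fin 1) (Fin 1) ℝ)))ᵀ *
            (Θ * Matrix.fromCols U c)ᵀ := by
        rw [Umat_succ, Tmat_succ, ← hU, ← hT, ← hβ, ← hc, Matrix.transpose_submatrix,
          Matrix.submatrix_mul_equiv, sub_mul_id, Matrix.transpose_submatrix,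
          Matrix.submatrix_mul_equiv, Matrix.submatrix_id_id]
      constructor
      · rw [List.range_succ, List.map_append, List.prod_append, ih1, List.map_singleton,
          List.prod_singleton, rhouse_eq, ← hβ, ← hc, hA]
        simp only [Matrix.fromBlocks_transpose, Matrix.transpose_fromCols,
          Matrix.mul_fromCols, Matrix.fromCols_mul_fromBlocks,
          Matrix.fromCols_mul_fromRows, Matrix.transpose_smul, Matrix.transpose_neg, Matrix.transpose_zero,
          Matrix.transpose_one, Matrix.transpose_mul, Matrix.transpose_transpose,
          Matrix.mul_zero, Matrix.zero_mul, Matrix.add_mul, Matrix.mul_add, Matrix.sub_mul,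
          Matrix.mul_sub, Matrix.mul_one, Matrix.one_mul, smul_mul_assoc, mul_smul_comm, Matrix.smul_mul, Matrix.mul_smul,
          neg_smul, Matrix.neg_mul, Matrix.mul_neg, smul_smul, Matrix.mul_assoc, add_zero, zero_add, smul_neg, smul_add, smul_sub, sub_neg_eq_add]
        abel
      · rw [List.range_succ, List.reverse_append, List.reverse_singleton,
          List.singleton_append, List.map_cons, List.prod_cons, ih2, rhouse_eq, ← hβ, ← hc, hA']
        simp only [Matrix.fromBlocks_transpose, Matrix.transpose_fromCols,
          Matrix.mul_fromCols, Matrix.fromCols_mul_fromBlocks,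
          Matrix.fromCols_mul_fromRows, Matrix.transpose_smul, Matrix.transpose_neg, Matrix.transpose_zero,
          Matrix.transpose_one, Matrix.transpose_mul, Matrix.transpose_transpose,
          Matrix.mul_zero, Matrix.zero_mul, Matrix.add_mul, Matrix.mul_add, Matrix.sub_mul,
          Matrix.mul_sub, Matrix.mul_one, Matrix.one_mul, smul_mul_assoc, mul_smul_comm, Matrix.smul_mul, Matrix.mul_smul,
          neg_smul, Matrix.neg_mul, Matrix.mul_neg, smul_smul, Matrix.mul_assoc, add_zero, zero_add, smul_neg, smul_add, smul_sub, sub_neg_eq_add]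
        abel
  constructor
  · simpa only [bind_pure_comp, List.map_eq_map, List.map_map, List.map_reverse,
      ← List.map_coe_finRange_eq_range] using (key m).1
  · simpa only [bind_pure_comp, List.map_eq_map, List.map_map, List.map_reverse,
      ← List.map_coe_finRange_eq_range] using (key m).2
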